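/- Let R be a commutative ring with 1 and f(x) = a_0 + a_1 x + ... + a_n x^n a polynomial of degree n over R. Suppose {r_1, ..., r_n} is an n-tuple of f, i.e., f(r_i) = 0 for all i and r_i - r_j is neither zero nor a zero divisor for i ≠ j. Then for each 0 ≤ i ≤ n-1, a_i = (-1)^{n-i} a_n · e_{n-i}(r_1, ..., r_n), where e_k denotes the k-th elementary symmetric polynomial, and consequently f(x) = a_n · ∏_{i=1}^{n} (x - r_i) in R[x]. -/

import Mathlib

open Polynomial

lemma prod_X_sub_C_dvd_of_tuple {R : Type*} [CommRing R] :
    ∀ (n : ℕ) (f : Polynomial R) (r : Fin n → R),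
    (∀ i, f.eval (r i) = 0) →
    (∀ i j, i ≠ j → r i - r j ∈ nonZeroDivisors R) →
    (∏ i : Fin n, (X - C (r i))) ∣ f := by
  intro n
  induction n with
  | zero => intro f r _ _; simp
  | succ n ih =>
    intro f r hroot hdiff
    obtain ⟨g, hg⟩ := (dvd_iff_isRoot.mpr (hroot 0))
    have hgr : ∀ i : Fin n, g.eval (r i.succ) = 0 := by
      intro i
      have h0 := hroot i.succ
      rw [hg] at h0
      simp only [eval_mul, eval_sub, eval_X, eval_C] at h0
      exact (hdiff i.succ 0 (Fin.succ_ne_zero i)).2 (g.eval (r i.succ))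
        (by rw [mul_comm]; exact h0)
    have hd : ∀ i j : Fin n, i ≠ j →
        (r ∘ Fin.succ) i - (r ∘ Fin.succ) j ∈ nonZeroDivisors R := by
      intro i j hij
      exact hdiff i.succ j.succ (fun h => hij (Fin.succ_injective n h))
    have := ih g (r ∘ Fin.succ) hgr hd
    rw [Fin.prod_univ_succ, hg]
    exact mul_dvd_mul_left _ (by simpa using this)

theorem polynomial_coeff_eq_esymm_of_tuple
    {R : Type*} [CommRing R] (n : ℕ)
    (f : Polynomial R) (hf : f.natDegree ≤ n)
    (r : Fin n → R)
    (hroot : ∀ i : Fin n, f.eval (r i) = 0)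
    (hdiff : ∀ i j : Fin n, i ≠ j → r i - r j ≠ 0 ∧ r i - r j ∈ nonZeroDivisors R) :
    (∀ i : ℕ, i < n →
      f.coeff i = (-1) ^ (n - i) * f.coeff n * (Finset.univ.val.map r).esymm (n - i)) ∧
    f = Polynomial.C (f.coeff n) * ∏ i : Fin n, (Polynomial.X - Polynomial.C (r i)) := by
  rcases subsingleton_or_nontrivial R with hsub | hnt
  · exact ⟨fun _ _ => Subsingleton.elim _ _, Subsingleton.elim _ _⟩
  obtain ⟨g, hg⟩ := prod_X_sub_C_dvd_of_tuple n f r hroot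
    (fun i j hij => (hdiff i j hij).2)
  set P : Polynomial R := ∏ i : Fin n, (X - C (r i)) with hP
  have hPm : P.Monic := monic_prod_of_monic _ _ (fun i _ => monic_X_sub_C _)
  have hPd : P.natDegree = n := by
    rw [hP, Polynomial.natDegree_prod_of_monic _ _ (fun i _ => monic_X_sub_C _)]
    simp [Polynomial.natDegree_X_sub_C, Polynomial.natDegree_X]
  have hgd : g.natDegree = 0 := by
    rcases eq_or_ne g 0 with h | h
    · simp [h]
    · have h1 : f.natDegree = P.natDegree + g.natDegree := by
        rw [hg]
        exact Polynomial.natDegree_mul' (by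
          simp [hPm.leadingCoeff, Polynomial.leadingCoeff_ne_zero.mpr h])
      omega
  obtain ⟨c, hc⟩ := Polynomial.natDegree_eq_zero.mp hgd
  have hgc : g = C c := hc.symm
  have hfc : f = P * C c := by rw [hg, hgc]
  have hcoeffn : f.coeff n = c := by
    rw [hfc, Polynomial.coeff_mul_C]
    have : P.coeff n = 1 := by
      have := hPm.coeff_natDegree
      rwa [hPd] at this
    rw [this, one_mul]
  have hPcoeff : ∀ i : ℕ, i ≤ n →
      P.coeff i = (-1) ^ (n - i) * (Finset.univ.val.map r).esymm (n - i) := by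
    intro i hi
    have hcard : Multiset.card (Finset.univ.val.map r) = n := by simp
    have hPeq : P = ((Finset.univ.val.map r).map (fun t => X - C t)).prod := by
      rw [hP, Finset.prod_eq_multiset_prod, Multiset.map_map]
      rfl
    rw [hPeq, Multiset.prod_X_sub_C_coeff _ (by rwa [hcard]), hcard]
  constructor
  · intro i hi
    rw [hcoeffn, hfc, Polynomial.coeff_mul_C, hPcoeff i (le_of_lt hi)]
    ring
  · rw [hcoeffn, mul_comm]; exact hfc
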